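/- Let X be a locally compact Hausdorff space and let k : X × X → [0,∞) be a continuous, symmetric, nonnegative (finite-valued) kernel. For every H ⊆ X and every compact L ⊆ X, the rendezvous set equals the average set: R(H,L) = A(H,L). -/

import Mathlib

open MeasureTheory Set ENNReal Filter

variable {X : Type*}

/-- The potential `U^μ(x) = ∫ k(x,y) dμ(y)` of a measure `μ` with respect to the kernel `k`. -/
noncomputable def potential [MeasurableSpace X] (k : X → X → ℝ≥0∞) (μ : Measure X) (x : X) :
    ℝ≥0∞ :=
  ∫⁻ y, k x y ∂μ

/-- `M1 H` : the regular Borel probability measures concentrated on `H`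
(i.e. with outer measure of `H` equal to `1`). -/
def M1 [TopologicalSpace X] [MeasurableSpace X] (H : Set X) : Set (Measure X) :=
  {μ | IsProbabilityMeasure μ ∧ μ.Regular ∧ μ H = 1}

/-- `M1sharp H` : finite convex combinations of Dirac measures at points of `H`. -/
def M1sharp [MeasurableSpace X] (H : Set X) : Set (Measure X) :=
  {μ | ∃ (n : ℕ) (w : Fin n → X) (α : Fin n → ℝ≥0∞),
    (∀ j, w j ∈ H) ∧ (∑ j, α j = 1) ∧ μ = ∑ j, α j • Measure.dirac (w j)}

/-- The quasi-uniform energy `q(H,L)`. -/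
noncomputable def qEnergy [TopologicalSpace X] [MeasurableSpace X] (k : X → X → ℝ≥0∞)
    (H L : Set X) : ℝ≥0∞ :=
  ⨅ μ ∈ M1 H, ⨆ x ∈ L, potential k μ x

/-- The restricted quasi-uniform energy `q^#(H,L)`. -/
noncomputable def qEnergySharp [MeasurableSpace X] (k : X → X → ℝ≥0∞) (H L : Set X) : ℝ≥0∞ :=
  ⨅ μ ∈ M1sharp H, ⨆ x ∈ L, potential k μ x

/-- The dual energy `q̲(H,L)`. -/
noncomputable def qEnergyLow [TopologicalSpace X] [MeasurableSpace X] (k : X → X → ℝ≥0∞)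
    (H L : Set X) : ℝ≥0∞ :=
  ⨆ μ ∈ M1 H, ⨅ x ∈ L, potential k μ x

/-- The restricted dual energy `q̲^#(H,L)`. -/
noncomputable def qEnergyLowSharp [MeasurableSpace X] (k : X → X → ℝ≥0∞) (H L : Set X) : ℝ≥0∞ :=
  ⨆ μ ∈ M1sharp H, ⨅ x ∈ L, potential k μ x

/-- The `n`-th Chebyshev constant `M_n(H,L)`. -/
noncomputable def chebM (k : X → X → ℝ≥0∞) (H L : Set X) (n : ℕ) : ℝ≥0∞ :=
  ⨆ (w : Fin n → X) (_ : ∀ j, w j ∈ H), ⨅ x ∈ L, (∑ j, k x (w j)) / (n : ℝ≥0∞)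

/-- The `n`-th dual Chebyshev constant `M̄_n(H,L)`. -/
noncomputable def chebMbar (k : X → X → ℝ≥0∞) (H L : Set X) (n : ℕ) : ℝ≥0∞ :=
  ⨅ (w : Fin n → X) (_ : ∀ j, w j ∈ H), ⨆ x ∈ L, (∑ j, k x (w j)) / (n : ℝ≥0∞)

/-- The `n`-th diameter `D_n(H)`. -/
noncomputable def diamN (k : X → X → ℝ≥0∞) (H : Set X) (n : ℕ) : ℝ≥0∞ :=
  ⨅ (w : Fin n → X) (_ : ∀ j, w j ∈ H),
    (2 * ∑ p ∈ Finset.univ.filter (fun p : Fin n × Fin n => p.1 < p.2), k (w p.1) (w p.2)) /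
      ((n : ℝ≥0∞) * ((n : ℝ≥0∞) - 1))

/-- The `n`-th rendezvous set `R_n(H,L)`. -/
noncomputable def rendezvousN (k : X → X → ℝ≥0∞) (H L : Set X) (n : ℕ) : Set ℝ≥0∞ :=
  ⋂ (w : Fin n → X) (_ : ∀ j, w j ∈ H),
    Icc (⨅ x ∈ L, (∑ j, k x (w j)) / (n : ℝ≥0∞)) (⨆ x ∈ L, (∑ j, k x (w j)) / (n : ℝ≥0∞))

/-- The rendezvous set `R(H,L) = ⋂_{n ≥ 1} R_n(H,L)`. -/
noncomputable def rendezvous (k : X → X → ℝ≥0∞) (H L : Set X) : Set ℝ≥0∞ :=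
  ⋂ n : ℕ, rendezvousN k H L (n + 1)

/-- The average set `A(H,L)`. -/
noncomputable def averageSet [TopologicalSpace X] [MeasurableSpace X] (k : X → X → ℝ≥0∞)
    (H L : Set X) : Set ℝ≥0∞ :=
  ⋂ μ ∈ M1 H, Icc (⨅ x ∈ L, potential k μ x) (⨆ x ∈ L, potential k μ x)

set_option linter.unusedSectionVars false
section AuxRegular
variable {X : Type*} [TopologicalSpace X] [T2Space X]
  [MeasurableSpace X] [BorelSpace X]

/-- A finite measure supported on a finite set is regular. -/
lemma regular_of_finite_support (μ : Measure X) [IsFiniteMeasure μ] {F : Set X}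
    (hF : F.Finite) (h0 : μ Fᶜ = 0) : μ.Regular := by
  haveI : Measure.OuterRegular μ := by
    refine ⟨fun A hA r hr => ⟨(F \ A)ᶜ, fun y hy => by simp [hy],
      ((hF.subset diff_subset).isClosed).isOpen_compl, lt_of_le_of_lt ?_ hr⟩⟩
    calc μ (F \ A)ᶜ ≤ μ (A ∪ Fᶜ) := measure_mono (by
          intro y hy
          by_cases h : y ∈ F
          · by_cases h' : y ∈ A
            · exact Or.inl h'
            · exact absurd ⟨h, h'⟩ hy
          · exact Or.inr h)
      _ ≤ μ A + μ Fᶜ := measure_union_le _ _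
      _ = μ A := by rw [h0, add_zero]
  refine ⟨fun U hU r hr => ⟨F ∩ U, inter_subset_right, (hF.inter_of_left U).isCompact, ?_⟩⟩
  calc r < μ U := hr
    _ ≤ μ ((F ∩ U) ∪ Fᶜ) := measure_mono (by intro y hy; by_cases h : y ∈ F <;> simp [h, hy])
    _ ≤ μ (F ∩ U) + μ Fᶜ := measure_union_le _ _
    _ = μ (F ∩ U) := by rw [h0, add_zero]

lemma nat_succ_mul_inv (n : ℕ) : ((n:ℝ≥0∞)+1) * ((n:ℝ≥0∞)+1)⁻¹ = 1 :=
  ENNReal.mul_inv_cancel (by simp) (by simp)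

lemma disc_prob {n : ℕ} (w : Fin (n+1) → X) :
    IsProbabilityMeasure (∑ j : Fin (n+1), (((n:ℝ≥0∞)+1)⁻¹) • Measure.dirac (w j)) := by
  constructor
  rw [Measure.coe_finset_sum]
  simp only [Finset.sum_apply, Measure.smul_apply, measure_univ, smul_eq_mul, mul_one]
  rw [Finset.sum_const, Finset.card_univ, Fintype.card_fin, nsmul_eq_mul]
  push_cast
  exact nat_succ_mul_inv n

lemma disc_H {H : Set X} {n : ℕ} (w : Fin (n+1) → X) (hw : ∀ j, w j ∈ H) :
    (∑ j : Fin (n+1), (((n:ℝ≥0∞)+1)⁻¹) • Measure.dirac (w j)) H = 1 := by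
  rw [Measure.coe_finset_sum]
  simp only [Finset.sum_apply, Measure.smul_apply, smul_eq_mul]
  have : ∀ j : Fin (n+1), Measure.dirac (w j) H = 1 := fun j =>
    Measure.dirac_apply_of_mem (hw j)
  simp only [this, mul_one]
  rw [Finset.sum_const, Finset.card_univ, Fintype.card_fin, nsmul_eq_mul]
  push_cast
  exact nat_succ_mul_inv n

lemma disc_regular {n : ℕ} (w : Fin (n+1) → X) :
    (∑ j : Fin (n+1), (((n:ℝ≥0∞)+1)⁻¹) • Measure.dirac (w j)).Regular := by
  haveI := disc_prob w
  apply regular_of_finite_support _ (finite_range w)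
  rw [Measure.coe_finset_sum]
  simp only [Finset.sum_apply, Measure.smul_apply, smul_eq_mul]
  have : ∀ j : Fin (n+1), Measure.dirac (w j) (range w)ᶜ = 0 := by
    intro j
    rw [Measure.dirac_apply' _ (((finite_range w).isClosed.measurableSet).compl)]
    simp [indicator_apply, mem_range_self]
  simp [this]

lemma disc_potential (k : X → X → NNReal) (hk : Continuous fun p : X × X => k p.1 p.2)
    {n : ℕ} (w : Fin (n+1) → X) (x : X) :
    potential (fun a b => (k a b : ℝ≥0∞))
        (∑ j : Fin (n+1), (((n:ℝ≥0∞)+1)⁻¹) • Measure.dirac (w j)) x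
      = (∑ j : Fin (n+1), (k x (w j) : ℝ≥0∞)) / ((n:ℝ≥0∞)+1) := by
  have hm : Measurable fun y => (k x y : ℝ≥0∞) := by
    apply Measurable.coe_nnreal_ennreal
    exact (hk.comp (Continuous.prodMk_right x)).measurable
  rw [potential, lintegral_finset_sum_measure]
  simp only [lintegral_smul_measure, lintegral_dirac' _ hm]
  rw [div_eq_mul_inv, Finset.sum_mul]
  exact Finset.sum_congr rfl fun j _ => mul_comm _ _

end AuxRegular
section AuxCells
variable {X : Type*} [TopologicalSpace X] [T2Space X]
  [MeasurableSpace X] [BorelSpace X]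

lemma exists_cells (k : X → X → NNReal) (hk : Continuous fun p : X × X => k p.1 p.2)
    {L K : Set X} (hL : IsCompact L) (hK : IsCompact K) {δ : ℝ} (hδ : 0 < δ) :
    ∃ (N : ℕ) (A : Fin N → Set X),
      (∀ i, MeasurableSet (A i)) ∧
      (∀ i j, i ≠ j → Disjoint (A i) (A j)) ∧
      (⋃ i, A i) = K ∧
      (∀ i, ∀ x ∈ L, ∀ y ∈ A i, ∀ y' ∈ A i, |(k x y : ℝ) - (k x y' : ℝ)| ≤ δ) := by
  haveI : CompactSpace ↥L := isCompact_iff_compactSpace.mp hL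
  have hf : Continuous fun p : X × ↥L => ((k (↑p.2) p.1 : ℝ)) := by
    have : Continuous fun p : X × ↥L => ((p.2 : X), p.1) :=
      (continuous_subtype_val.comp continuous_snd).prodMk continuous_fst
    exact NNReal.continuous_coe.comp (hk.comp this)
  set f : C(X × ↥L, ℝ) := ⟨_, hf⟩ with hfdef
  set φ : X → C(↥L, ℝ) := fun y => f.curry y with hφdef
  have hφ : Continuous φ := f.curry.continuous
  set U : X → Set X := fun z => φ ⁻¹' Metric.ball (φ z) (δ/2) with hUdef
  have hUopen : ∀ z, IsOpen (U z) := fun z => Metric.isOpen_ball.preimage hφ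
  have hUmem : ∀ y, y ∈ U y := fun y => by
    simp only [hUdef, mem_preimage, Metric.mem_ball, dist_self]; positivity
  obtain ⟨s, hs⟩ := hK.elim_finite_subcover U hUopen
    (fun y hy => mem_iUnion.mpr ⟨y, hUmem y⟩)
  set N := s.card with hN
  set z : Fin N → X := fun i => (s.equivFin.symm i : X) with hz
  set B : ℕ → Set X := fun m => if h : m < N then K ∩ U (z ⟨m, h⟩) else ∅ with hB
  have hBmeas : ∀ m, MeasurableSet (B m) := by
    intro m
    simp only [hB]
    by_cases h : m < N
    · rw [dif_pos h]; exact hK.isClosed.measurableSet.inter (hUopen _).measurableSet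
    · rw [dif_neg h]; exact MeasurableSet.empty
  have hBsub : ∀ m, B m ⊆ K := by
    intro m; simp only [hB]
    by_cases h : m < N
    · rw [dif_pos h]; exact inter_subset_left
    · rw [dif_neg h]; exact empty_subset _
  have hBU : ∀ (i : Fin N), B i ⊆ U (z i) := by
    intro i
    simp only [hB, Fin.is_lt, dif_pos, Fin.eta]
    exact inter_subset_right
  have hBcover : ⋃ m, B m = K := by
    apply subset_antisymm
    · exact iUnion_subset hBsub
    · intro y hy
      obtain ⟨z', hz's, hyz'⟩ := by
        have := hs hy
        simpa only [mem_iUnion, exists_prop] using this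
      refine mem_iUnion.mpr ⟨(s.equivFin ⟨z', hz's⟩ : ℕ), ?_⟩
      have h1 : ((s.equivFin ⟨z', hz's⟩ : ℕ)) < N := (s.equivFin ⟨z', hz's⟩).isLt
      simp only [hB, h1, dif_pos]
      refine ⟨hy, ?_⟩
      have : z ⟨(s.equivFin ⟨z', hz's⟩ : ℕ), h1⟩ = z' := by
        simp only [hz, Fin.eta, Equiv.symm_apply_apply]
      rw [this]
      exact hyz'
  refine ⟨N, fun i => disjointed B i, fun i => MeasurableSet.disjointed hBmeas i,
    fun i j hij => disjoint_disjointed B (fun h => hij (Fin.val_injective h)), ?_, ?_⟩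
  · apply subset_antisymm
    · exact iUnion_subset fun i => (disjointed_subset B i).trans (hBsub i)
    · intro y hy
      rw [← hBcover] at hy
      rw [← iUnion_disjointed] at hy
      obtain ⟨m, hm⟩ := mem_iUnion.mp hy
      have hmN : m < N := by
        by_contra h
        have : B m = ∅ := by simp only [hB]; rw [dif_neg h]
        exact absurd (disjointed_subset B m hm) (by simp [this])
      exact mem_iUnion.mpr ⟨⟨m, hmN⟩, hm⟩
  · intro i x hx y hyA y' hy'A
    have hy : y ∈ U (z i) := hBU i (disjointed_subset B i hyA)
    have hy' : y' ∈ U (z i) := hBU i (disjointed_subset B i hy'A)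
    have hdist : dist (φ y) (φ y') ≤ δ := by
      calc dist (φ y) (φ y') ≤ dist (φ y) (φ (z i)) + dist (φ (z i)) (φ y') :=
            dist_triangle _ _ _
        _ ≤ δ/2 + δ/2 := add_le_add (le_of_lt hy) (le_of_lt (by
              rw [dist_comm]; exact hy'))
        _ = δ := by ring
    have := (ContinuousMap.dist_apply_le_dist (f := φ y) (g := φ y') ⟨x, hx⟩).trans hdist
    rw [Real.dist_eq] at this
    exact this
end AuxCells
section AuxApprox
open scoped NNReal
variable {X : Type*} [TopologicalSpace X] [T2Space X]
  [MeasurableSpace X] [BorelSpace X]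

lemma pos_inter_nonempty {H : Set X} (μ : Measure X) [IsProbabilityMeasure μ]
    (hH : μ H = 1) {A : Set X} (hA : MeasurableSet A) (h : μ A ≠ 0) :
    (A ∩ H).Nonempty := by
  by_contra hne
  rw [not_nonempty_iff_eq_empty] at hne
  have hsub : H ⊆ Aᶜ := fun y hy hyA =>
    (eq_empty_iff_forall_notMem.mp hne y) ⟨hyA, hy⟩
  have h1 : (1 : ℝ≥0∞) ≤ μ Aᶜ := hH ▸ measure_mono hsub
  rw [prob_compl_eq_one_sub hA] at h1
  have : (1 : ℝ≥0∞) - μ A < 1 := ENNReal.sub_lt_self one_ne_top one_ne_zero h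
  exact absurd h1 (not_le.mpr this)

lemma exists_point_approx (k : X → X → NNReal) (hk : Continuous fun p : X × X => k p.1 p.2)
    {H L K : Set X} (μ : Measure X) [IsProbabilityMeasure μ] (hH : μ H = 1)
    (hL : IsCompact L) (hK : IsCompact K) {δ : ℝ≥0} (hδ : 0 < δ) :
    ∃ (N : ℕ) (p : Fin N → X) (q : Fin N → ℝ≥0∞),
      (∀ i, p i ∈ H) ∧ (∀ i, q i ≠ ∞) ∧ (∑ i, q i = μ K) ∧
      ∀ x ∈ L,
        (∫⁻ y in K, (k x y : ℝ≥0∞) ∂μ ≤ (∑ i, q i * (k x (p i) : ℝ≥0∞)) + δ * μ K) ∧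
        ((∑ i, q i * (k x (p i) : ℝ≥0∞)) ≤ ∫⁻ y in K, (k x y : ℝ≥0∞) ∂μ + δ * μ K) := by
  have hHne : H.Nonempty := by
    rcases eq_empty_or_nonempty H with h | h
    · rw [h] at hH; simp at hH
    · exact h
  obtain ⟨h0, hh0⟩ := hHne
  obtain ⟨N, A, hmeas, hdisj, hunion, hdiam⟩ :=
    exists_cells k hk hL hK (δ := (δ : ℝ)) (by exact_mod_cast hδ)
  have hpos : ∀ i, μ (A i) ≠ 0 → (A i ∩ H).Nonempty :=
    fun i h => pos_inter_nonempty μ hH (hmeas i) h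
  classical
  set p : Fin N → X := fun i => if h : μ (A i) ≠ 0 then (hpos i h).choose else h0 with hpdef
  have hpH : ∀ i, p i ∈ H := by
    intro i
    simp only [hpdef]
    split
    · next h => exact (hpos i h).choose_spec.2
    · exact hh0
  have hpA : ∀ i, μ (A i) ≠ 0 → p i ∈ A i := by
    intro i h
    simp only [hpdef, dif_pos h]
    exact (hpos i h).choose_spec.1
  set q : Fin N → ℝ≥0∞ := fun i => μ (A i) with hqdef
  have hqfin : ∀ i, q i ≠ ∞ := fun i => measure_ne_top μ _
  have hPairwise : Pairwise (Function.onFun Disjoint A) := fun i j hij => hdisj i j hij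
  have hqsum : ∑ i, q i = μ K := by
    rw [← hunion, measure_iUnion hPairwise hmeas, tsum_fintype]
  have hsplit : ∀ x : X, ∫⁻ y in K, (k x y : ℝ≥0∞) ∂μ
      = ∑ i, ∫⁻ y in A i, (k x y : ℝ≥0∞) ∂μ := by
    intro x
    rw [← hunion, lintegral_iUnion hmeas hPairwise, tsum_fintype]
  have hmK : ∀ x : X, Measurable fun y => (k x y : ℝ≥0∞) := fun x =>
    Measurable.coe_nnreal_ennreal (hk.comp (Continuous.prodMk_right x)).measurable
  refine ⟨N, p, q, hpH, hqfin, hqsum, fun x hx => ?_⟩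
  have hup : ∀ i, ∫⁻ y in A i, (k x y : ℝ≥0∞) ∂μ ≤ q i * (k x (p i) : ℝ≥0∞) + δ * q i := by
    intro i
    by_cases h : μ (A i) = 0
    · rw [Measure.restrict_eq_zero.mpr h, lintegral_zero_measure]
      exact zero_le
    · have hpt : ∀ y ∈ A i, (k x y : ℝ≥0∞) ≤ (k x (p i) : ℝ≥0∞) + δ := by
        intro y hy
        have := hdiam i x hx y hy (p i) (hpA i h)
        have hreal : (k x y : ℝ) ≤ (k x (p i) : ℝ) + δ := by
          have := abs_le.mp this
          linarith [this.2]
        have hnn : k x y ≤ k x (p i) + δ := by exact_mod_cast hreal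
        calc (k x y : ℝ≥0∞) ≤ ((k x (p i) + δ : NNReal) : ℝ≥0∞) := by exact_mod_cast hnn
          _ = (k x (p i) : ℝ≥0∞) + δ := by push_cast; rfl
      calc ∫⁻ y in A i, (k x y : ℝ≥0∞) ∂μ
          ≤ ∫⁻ _ in A i, ((k x (p i) : ℝ≥0∞) + δ) ∂μ := setLIntegral_mono' (hmeas i) hpt
        _ = ((k x (p i) : ℝ≥0∞) + δ) * q i := setLIntegral_const _ _
        _ = q i * (k x (p i) : ℝ≥0∞) + δ * q i := by ring
  have hlow : ∀ i, q i * (k x (p i) : ℝ≥0∞) ≤ ∫⁻ y in A i, (k x y : ℝ≥0∞) ∂μ + δ * q i := by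
    intro i
    by_cases h : μ (A i) = 0
    · simp only [hqdef, h, zero_mul, mul_zero, add_zero]
      exact zero_le
    · have hpt : ∀ y ∈ A i, (k x (p i) : ℝ≥0∞) ≤ (k x y : ℝ≥0∞) + δ := by
        intro y hy
        have := hdiam i x hx (p i) (hpA i h) y hy
        have hreal : (k x (p i) : ℝ) ≤ (k x y : ℝ) + δ := by
          have := abs_le.mp this
          linarith [this.2]
        have hnn : k x (p i) ≤ k x y + δ := by exact_mod_cast hreal
        calc (k x (p i) : ℝ≥0∞) ≤ ((k x y + δ : NNReal) : ℝ≥0∞) := by exact_mod_cast hnn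
          _ = (k x y : ℝ≥0∞) + δ := by push_cast; rfl
      calc q i * (k x (p i) : ℝ≥0∞) = ((k x (p i) : ℝ≥0∞)) * q i := mul_comm _ _
        _ = ∫⁻ _ in A i, ((k x (p i)) : ℝ≥0∞) ∂μ := (setLIntegral_const _ _).symm
        _ ≤ ∫⁻ y in A i, ((k x y : ℝ≥0∞) + δ) ∂μ := setLIntegral_mono' (hmeas i) hpt
        _ = ∫⁻ y in A i, (k x y : ℝ≥0∞) ∂μ + δ * q i := by
            rw [lintegral_add_right _ measurable_const, setLIntegral_const]
  constructor
  · rw [hsplit x]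
    calc ∑ i, ∫⁻ y in A i, (k x y : ℝ≥0∞) ∂μ
        ≤ ∑ i, (q i * (k x (p i) : ℝ≥0∞) + δ * q i) := Finset.sum_le_sum fun i _ => hup i
      _ = (∑ i, q i * (k x (p i) : ℝ≥0∞)) + δ * ∑ i, q i := by
          rw [Finset.sum_add_distrib, Finset.mul_sum]
      _ = (∑ i, q i * (k x (p i) : ℝ≥0∞)) + δ * μ K := by rw [hqsum]
  · calc ∑ i, q i * (k x (p i) : ℝ≥0∞)
        ≤ ∑ i, (∫⁻ y in A i, (k x y : ℝ≥0∞) ∂μ + δ * q i) := Finset.sum_le_sum fun i _ => hlow i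
      _ = ∫⁻ y in K, (k x y : ℝ≥0∞) ∂μ + δ * μ K := by
          rw [Finset.sum_add_distrib, ← Finset.mul_sum, hqsum, ← hsplit x]
end AuxApprox
section AuxCont
open scoped NNReal
variable {X : Type*} [TopologicalSpace X] [T2Space X]
  [MeasurableSpace X] [BorelSpace X]

lemma potK_ne_top (k : X → X → NNReal) (hk : Continuous fun p : X × X => k p.1 p.2)
    {H L K : Set X} (μ : Measure X) [IsProbabilityMeasure μ] (hH : μ H = 1)
    (hL : IsCompact L) (hK : IsCompact K) {x : X} (hx : x ∈ L) :
    ∫⁻ y in K, (k x y : ℝ≥0∞) ∂μ ≠ ∞ := by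
  obtain ⟨N, p, q, hpH, hqfin, hqsum, hb⟩ :=
    exists_point_approx k hk μ hH hL hK (δ := 1) one_pos
  have h1 := (hb x hx).1
  refine ne_top_of_le_ne_top ?_ h1
  apply ENNReal.add_ne_top.mpr
  constructor
  · exact (ENNReal.sum_lt_top.mpr fun i _ => ENNReal.mul_lt_top (hqfin i).lt_top (by simp)).ne
  · exact ENNReal.mul_ne_top (by simp) (measure_ne_top μ K)

lemma exists_cont_approx (k : X → X → NNReal) (hk : Continuous fun p : X × X => k p.1 p.2)
    {H L K : Set X} (μ : Measure X) [IsProbabilityMeasure μ] (hH : μ H = 1)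
    (hL : IsCompact L) (hK : IsCompact K) {δ : ℝ≥0} (hδ : 0 < δ) :
    ∃ F : X → ℝ, Continuous F ∧ ∀ x ∈ L,
      |F x - (∫⁻ y in K, (k x y : ℝ≥0∞) ∂μ).toReal| ≤ δ := by
  obtain ⟨N, p, q, hpH, hqfin, hqsum, hb⟩ := exists_point_approx k hk μ hH hL hK hδ
  refine ⟨fun x => ∑ i, (q i).toReal * (k x (p i) : ℝ), ?_, ?_⟩
  · apply continuous_finset_sum
    intro i _
    exact continuous_const.mul (NNReal.continuous_coe.comp
      (hk.comp (continuous_id.prodMk continuous_const)))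
  · intro x hx
    obtain ⟨hub, hlb⟩ := hb x hx
    set a := ∫⁻ y in K, (k x y : ℝ≥0∞) ∂μ with ha
    set b := ∑ i, q i * (k x (p i) : ℝ≥0∞) with hbdef
    have hafin : a ≠ ∞ := potK_ne_top k hk μ hH hL hK hx
    have hbfin : b ≠ ∞ :=
      (ENNReal.sum_lt_top.mpr fun i _ => ENNReal.mul_lt_top (hqfin i).lt_top (by simp)).ne
    have hδμ : (δ : ℝ≥0∞) * μ K ≤ (δ : ℝ≥0∞) := by
      calc (δ : ℝ≥0∞) * μ K ≤ (δ : ℝ≥0∞) * 1 := by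
            exact mul_le_mul_right (prob_le_one) _
        _ = δ := mul_one _
    have h1 : a.toReal ≤ b.toReal + δ := by
      have : a ≤ b + δ := hub.trans (add_le_add_right hδμ _)
      calc a.toReal ≤ (b + δ).toReal := ENNReal.toReal_mono
            (ENNReal.add_ne_top.mpr ⟨hbfin, ENNReal.coe_ne_top⟩) this
        _ = b.toReal + δ := by rw [ENNReal.toReal_add hbfin ENNReal.coe_ne_top, ENNReal.coe_toReal]
    have h2 : b.toReal ≤ a.toReal + δ := by
      have : b ≤ a + δ := hlb.trans (add_le_add_right hδμ _)
      calc b.toReal ≤ (a + δ).toReal := ENNReal.toReal_mono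
            (ENNReal.add_ne_top.mpr ⟨hafin, ENNReal.coe_ne_top⟩) this
        _ = a.toReal + δ := by rw [ENNReal.toReal_add hafin ENNReal.coe_ne_top, ENNReal.coe_toReal]
    have hbF : b.toReal = ∑ i, (q i).toReal * (k x (p i) : ℝ) := by
      rw [hbdef, ENNReal.toReal_sum (fun i _ => (ENNReal.mul_lt_top (hqfin i).lt_top (by simp)).ne)]
      exact Finset.sum_congr rfl fun i _ => by rw [ENNReal.toReal_mul, ENNReal.coe_toReal]
    show |(∑ i, (q i).toReal * ((k x (p i)) : ℝ)) - a.toReal| ≤ (δ : ℝ)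
    rw [← hbF, abs_le]
    constructor <;> linarith

lemma continuousOn_potK (k : X → X → NNReal) (hk : Continuous fun p : X × X => k p.1 p.2)
    {H L K : Set X} (μ : Measure X) [IsProbabilityMeasure μ] (hH : μ H = 1)
    (hL : IsCompact L) (hK : IsCompact K) :
    ContinuousOn (fun x => (∫⁻ y in K, (k x y : ℝ≥0∞) ∂μ).toReal) L := by
  have hchoice : ∀ m : ℕ, ∃ F : X → ℝ, Continuous F ∧ ∀ x ∈ L,
      |F x - (∫⁻ y in K, (k x y : ℝ≥0∞) ∂μ).toReal| ≤ (1 : ℝ≥0) / (m + 1) :=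
    fun m => exists_cont_approx k hk μ hH hL hK (δ := 1/(m+1))
      (div_pos one_pos (by positivity))
  choose F hFc hFb using hchoice
  have huni : TendstoUniformlyOn F (fun x => (∫⁻ y in K, (k x y : ℝ≥0∞) ∂μ).toReal) atTop L := by
    rw [Metric.tendstoUniformlyOn_iff]
    intro ε hε
    obtain ⟨m₀, hm₀⟩ := exists_nat_one_div_lt hε
    filter_upwards [eventually_ge_atTop m₀] with m hm x hx
    rw [Real.dist_eq, abs_sub_comm]
    calc |F m x - (∫⁻ y in K, (k x y : ℝ≥0∞) ∂μ).toReal| ≤ (1 : ℝ≥0) / (m + 1) := hFb m x hx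
      _ ≤ 1 / (m₀ + 1) := by
          push_cast
          apply div_le_div_of_nonneg_left one_pos.le (by positivity)
          exact_mod_cast add_le_add_left (Nat.cast_le.mpr hm) 1
      _ < ε := hm₀
  exact huni.continuousOn (Eventually.of_forall fun m => (hFc m).continuousOn).frequently
end AuxCont
section AuxTrunc
open scoped NNReal
variable {X : Type*} [TopologicalSpace X] [T2Space X]
  [MeasurableSpace X] [BorelSpace X]

lemma exists_compact_lintegral_gt (μ : Measure X) [IsProbabilityMeasure μ] (hreg : μ.Regular)
    {f : X → ℝ≥0∞} (hf : Measurable f) (hfin : ∀ y, f y ≠ ∞) {c : ℝ≥0∞}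
    (hc : c < ∫⁻ y, f y ∂μ) :
    ∃ K : Set X, IsCompact K ∧ c < ∫⁻ y in K, f y ∂μ := by
  have hmono : Monotone (fun (n : ℕ) (y : X) => min (f y) n) := fun a b hab y =>
    min_le_min le_rfl (by exact_mod_cast Nat.cast_le.mpr hab)
  have hsup : (fun y => ⨆ n : ℕ, min (f y) n) = f := by
    funext y
    apply le_antisymm (iSup_le fun n => min_le_left _ _)
    obtain ⟨n, hn⟩ := ENNReal.exists_nat_gt (hfin y)
    exact le_iSup_of_le n (le_min le_rfl hn.le)
  have hlim : ∫⁻ y, f y ∂μ = ⨆ n : ℕ, ∫⁻ y, min (f y) n ∂μ := by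
    rw [← lintegral_iSup (fun n => hf.min measurable_const) hmono]
    rw [show (fun y => ⨆ n : ℕ, min (f y) n) = f from hsup]
  rw [hlim] at hc
  obtain ⟨n, hn⟩ := lt_iSup_iff.mp hc
  set g : X → ℝ≥0∞ := fun y => min (f y) n with hg
  set d := ∫⁻ y, g y ∂μ with hd
  have hdfin : d ≠ ∞ := by
    refine ne_top_of_le_ne_top (b := (n : ℝ≥0∞)) (by simp) ?_
    calc d ≤ ∫⁻ _, (n : ℝ≥0∞) ∂μ := lintegral_mono fun y => min_le_right _ _
      _ = n := by rw [lintegral_const, measure_univ, mul_one]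
  have hcfin : c ≠ ∞ := (hn.trans_le le_top).ne_top
  have hdc0 : d - c ≠ 0 := by
    rw [ne_eq, tsub_eq_zero_iff_le]
    exact not_le.mpr hn
  have hdcfin : d - c ≠ ∞ := ne_top_of_le_ne_top hdfin (tsub_le_self)
  set η : ℝ≥0∞ := (d - c) / 2 / (n + 1) with hη
  have hη0 : η ≠ 0 := by
    rw [hη]
    simp only [ne_eq, ENNReal.div_eq_zero_iff]
    push_neg
    refine ⟨⟨?_, by simp⟩, by simp⟩
    simp [ENNReal.div_eq_zero_iff, hdc0]
  have hηfin : η ≠ ∞ := by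
    rw [hη]
    exact (ENNReal.div_le_div_right (ENNReal.half_le_self) _).trans_lt
      (ENNReal.div_lt_top hdcfin (by simp)) |>.ne
  haveI := hreg
  obtain ⟨K, -, hKc, hKgt⟩ := MeasurableSet.exists_lt_isCompact_of_ne_top
    (μ := μ) MeasurableSet.univ (measure_ne_top μ univ) (r := 1 - η)
    (by rw [measure_univ]; exact ENNReal.sub_lt_self one_ne_top one_ne_zero hη0)
  have hKmeas : MeasurableSet K := hKc.isClosed.measurableSet
  have hKcompl : μ Kᶜ < η := by
    rw [prob_compl_eq_one_sub hKmeas]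
    rw [ENNReal.sub_lt_iff_lt_right (measure_ne_top μ K) prob_le_one]
    calc (1 : ℝ≥0∞) ≤ η + (1 - η) := le_add_tsub
      _ < η + μ K := ENNReal.add_lt_add_left hηfin hKgt
  refine ⟨K, hKc, ?_⟩
  have hbound : d ≤ ∫⁻ y in K, g y ∂μ + n * μ Kᶜ := by
    rw [hd, ← lintegral_add_compl g hKmeas]
    apply add_le_add_right
    calc ∫⁻ y in Kᶜ, g y ∂μ ≤ ∫⁻ _ in Kᶜ, (n : ℝ≥0∞) ∂μ :=
          setLIntegral_mono measurable_const fun y _ => min_le_right _ _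
      _ = n * μ Kᶜ := setLIntegral_const _ _
  have hfinal : c < ∫⁻ y in K, g y ∂μ := by
    by_contra h
    push_neg at h
    have hnη : (n : ℝ≥0∞) * η ≤ (d - c) / 2 := by
      rw [hη]
      calc (n : ℝ≥0∞) * ((d - c) / 2 / (n + 1)) ≤ (n + 1) * ((d - c) / 2 / (n + 1)) :=
            mul_le_mul_left (le_self_add) _
        _ = (d - c) / 2 := ENNReal.mul_div_cancel (by simp) (by simp)
    have : d ≤ c + (d - c) / 2 := by
      calc d ≤ ∫⁻ y in K, g y ∂μ + n * μ Kᶜ := hbound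
        _ ≤ c + n * η := add_le_add h (mul_le_mul_right hKcompl.le _)
        _ ≤ c + (d - c) / 2 := add_le_add_right hnη _
    have hlt : c + (d - c) / 2 < d := by
      calc c + (d - c) / 2 < c + (d - c) :=
            ENNReal.add_lt_add_left hcfin (ENNReal.half_lt_self hdc0 hdcfin)
        _ = d := add_tsub_cancel_of_le hn.le
    exact absurd hlt (not_lt.mpr this)
  exact hfinal.trans_le (lintegral_mono fun y => min_le_left _ _)
end AuxTrunc
section AuxUniform
open scoped NNReal
variable {X : Type*} [TopologicalSpace X] [T2Space X]
  [MeasurableSpace X] [BorelSpace X]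

lemma exists_compact_uniform_gt (k : X → X → NNReal)
    (hk : Continuous fun p : X × X => k p.1 p.2) {H L : Set X} (μ : Measure X)
    [IsProbabilityMeasure μ] (hreg : μ.Regular) (hH : μ H = 1) (hL : IsCompact L)
    {t' : ℝ≥0∞} (hpt : ∀ x ∈ L, t' < ∫⁻ y, (k x y : ℝ≥0∞) ∂μ) :
    ∃ K : Set X, IsCompact K ∧ ∀ x ∈ L, t' < ∫⁻ y in K, (k x y : ℝ≥0∞) ∂μ := by
  rcases L.eq_empty_or_nonempty with hLe | hLne
  · exact ⟨∅, isCompact_empty, by simp [hLe]⟩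
  haveI : CompactSpace ↥L := isCompact_iff_compactSpace.mp hL
  have hmK : ∀ x : X, Measurable fun y => (k x y : ℝ≥0∞) := fun x =>
    Measurable.coe_nnreal_ennreal (hk.comp (Continuous.prodMk_right x)).measurable
  have hx' : ∀ x : ↥L, ∃ Kx : Set X, IsCompact Kx ∧
      t' < ∫⁻ y in Kx, (k (x : X) y : ℝ≥0∞) ∂μ := fun x =>
    exists_compact_lintegral_gt μ hreg (hmK x) (fun y => ENNReal.coe_ne_top) (hpt x x.2)
  choose Kx hKxc hKxlt using hx'
  obtain ⟨x₀, hx₀⟩ := hLne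
  have ht' : t' ≠ ∞ := (hKxlt ⟨x₀, hx₀⟩).ne_top
  set V : ↥L → Set ↥L := fun x =>
    {z : ↥L | t'.toReal < (∫⁻ y in Kx x, (k (z : X) y : ℝ≥0∞) ∂μ).toReal} with hV
  have hVopen : ∀ x, IsOpen (V x) := by
    intro x
    have hcont := continuousOn_potK k hk μ hH hL (hKxc x)
    rw [continuousOn_iff_continuous_restrict] at hcont
    exact isOpen_Ioi.preimage hcont
  have hVmem : ∀ x : ↥L, x ∈ V x := by
    intro x
    have hfin := potK_ne_top k hk μ hH hL (hKxc x) x.2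
    exact (ENNReal.toReal_lt_toReal ht' hfin).mpr (hKxlt x)
  obtain ⟨s, hs⟩ := isCompact_univ.elim_finite_subcover V hVopen
    (fun z _ => mem_iUnion.mpr ⟨z, hVmem z⟩)
  refine ⟨⋃ x ∈ s, Kx x, s.finite_toSet.isCompact_biUnion (fun x _ => hKxc x), ?_⟩
  intro z hz
  obtain ⟨x, hxs, hzV⟩ := by
    have := hs (mem_univ (⟨z, hz⟩ : ↥L))
    simpa only [mem_iUnion, exists_prop] using this
  have hfin : ∫⁻ y in Kx x, (k z y : ℝ≥0∞) ∂μ ≠ ∞ := potK_ne_top k hk μ hH hL (hKxc x) hz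
  have h1 : t' < ∫⁻ y in Kx x, (k z y : ℝ≥0∞) ∂μ :=
    (ENNReal.toReal_lt_toReal ht' hfin).mp hzV
  exact h1.trans_le (lintegral_mono_set (subset_biUnion_of_mem hxs))
end AuxUniform
section AuxFnSum
open scoped NNReal
variable {X : Type*}

lemma exists_fn_sum : ∀ (N : ℕ) (c : Fin N → ℕ) (p : Fin N → X),
    ∃ w : Fin (∑ i, c i) → X, (∀ j, w j ∈ Set.range p) ∧
      ∀ g : X → ℝ≥0∞, ∑ j, g (w j) = ∑ i, (c i : ℝ≥0∞) * g (p i) := by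
  intro N
  induction N with
  | zero =>
    intro c p
    haveI : IsEmpty (Fin (∑ i : Fin 0, c i)) := by
      rw [show (∑ i : Fin 0, c i) = 0 by simp]
      infer_instance
    exact ⟨fun j => isEmptyElim j, fun j => isEmptyElim j, fun g => by simp⟩
  | succ N ih =>
    intro c p
    obtain ⟨w', hw'mem, hw'⟩ := ih (fun i => c i.succ) (fun i => p i.succ)
    have hcard : ∑ i, c i = c 0 + ∑ i : Fin N, c i.succ := Fin.sum_univ_succ c
    set e : Fin (∑ i, c i) ≃ Fin (c 0) ⊕ Fin (∑ i : Fin N, c i.succ) :=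
      (finCongr hcard).trans finSumFinEquiv.symm with he
    refine ⟨fun j => Sum.elim (fun _ : Fin (c 0) => p 0) w' (e j), ?_, ?_⟩
    · intro j
      rcases hej : e j with a | b
      · exact ⟨0, by simp [hej]⟩
      · obtain ⟨i, hi⟩ := hw'mem b
        exact ⟨i.succ, by simp only [hej, Sum.elim_inr]; exact hi⟩
    · intro g
      have h1 : ∑ j : Fin (∑ i, c i), g (Sum.elim (fun _ : Fin (c 0) => p 0) w' (e j))
          = ∑ j : Fin (c 0) ⊕ Fin (∑ i : Fin N, c i.succ),
              g (Sum.elim (fun _ => p 0) w' j) :=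
        Fintype.sum_equiv e _ _ (fun j => rfl)
      rw [h1, Fintype.sum_sum_type, Fin.sum_univ_succ]
      congr 1
      · simp [Finset.sum_const, nsmul_eq_mul]
      · exact hw' g
end AuxFnSum
section AuxDisc
open scoped NNReal
variable {X : Type*} [TopologicalSpace X] [T2Space X]
  [MeasurableSpace X] [BorelSpace X]

lemma H_nonempty {H : Set X} (μ : Measure X) [IsProbabilityMeasure μ] (hH : μ H = 1) :
    H.Nonempty := by
  rcases eq_empty_or_nonempty H with h | h
  · rw [h] at hH; simp at hH
  · exact h

lemma exists_discrete_approx (k : X → X → NNReal)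
    (hk : Continuous fun p : X × X => k p.1 p.2) {H L K : Set X} (μ : Measure X)
    [IsProbabilityMeasure μ] (hH : μ H = 1) (hL : IsCompact L) (hK : IsCompact K)
    (hμK : μ K ≠ 0) {δ : ℝ≥0∞} (hδ : δ ≠ 0) :
    ∃ (n : ℕ) (_ : 0 < n) (w : Fin n → X), (∀ j, w j ∈ H) ∧
      ∀ x ∈ L,
        ((∫⁻ y in K, (k x y : ℝ≥0∞) ∂μ) / μ K ≤ (∑ j, (k x (w j) : ℝ≥0∞)) / n + δ) ∧
        ((∑ j, (k x (w j) : ℝ≥0∞)) / n ≤ (∫⁻ y in K, (k x y : ℝ≥0∞) ∂μ) / μ K + δ) := by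
  rcases L.eq_empty_or_nonempty with hLe | hLne
  · obtain ⟨h0, hh0⟩ := H_nonempty μ hH
    exact ⟨1, one_pos, fun _ => h0, fun _ => hh0, fun x hx => absurd hx (by simp [hLe])⟩
  obtain ⟨ε, hε0, hεδ⟩ : ∃ ε : ℝ≥0, 0 < ε ∧ (ε : ℝ≥0∞) + ε ≤ δ := by
    rcases eq_or_ne δ ∞ with h | h
    · exact ⟨1, one_pos, by simp [h]⟩
    · have hδ' : δ.toNNReal ≠ 0 := by
        simp only [ne_eq, ENNReal.toNNReal_eq_zero_iff]
        push_neg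
        exact ⟨hδ, h⟩
      refine ⟨δ.toNNReal / 2, by positivity, ?_⟩
      have h2 : δ.toNNReal / 2 + δ.toNNReal / 2 = δ.toNNReal := by
        rw [← add_div, ← two_mul, mul_div_cancel_left₀ _ (by norm_num : (2:ℝ≥0) ≠ 0)]
      rw [← ENNReal.coe_add, h2, ENNReal.coe_toNNReal h]
  have hKfin : μ K ≠ ∞ := measure_ne_top μ K
  obtain ⟨N, p, q, hpH, hqfin, hqsum, hb⟩ := exists_point_approx k hk μ hH hL hK hε0
  set Q : Fin N → ℝ≥0∞ := fun i => q i / μ K with hQ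
  have hQfin : ∀ i, Q i ≠ ∞ := fun i => (ENNReal.div_lt_top (hqfin i) hμK).ne
  have hQsum : ∑ i, Q i = 1 := by
    simp only [hQ, ENNReal.div_eq_inv_mul]
    rw [← Finset.mul_sum, hqsum, ← ENNReal.div_eq_inv_mul, ENNReal.div_self hμK hKfin]
  have hN : 0 < N := by
    rcases Nat.eq_zero_or_pos N with h | h
    · exfalso; subst h; simp at hQsum
    · exact h
  have hMex : ∀ i, ∃ Mi : ℝ≥0, ∀ x ∈ L, k x (p i) ≤ Mi := by
    intro i
    obtain ⟨xm, hxm, hmax⟩ := hL.exists_isMaxOn hLne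
      ((hk.comp (continuous_id.prodMk continuous_const)).continuousOn :
        ContinuousOn (fun x => k x (p i)) L)
    exact ⟨k xm (p i), fun x hx => hmax hx⟩
  choose Mi hMi using hMex
  set M : ℝ≥0 := Finset.univ.sup Mi with hM
  have hMle : ∀ x ∈ L, ∀ i, k x (p i) ≤ M := fun x hx i =>
    (hMi i x hx).trans (Finset.le_sup (Finset.mem_univ i))
  set qr : Fin N → ℝ := fun i => (Q i).toReal with hqr
  have hqr_sum : ∑ i, qr i = 1 := by
    rw [hqr, ← ENNReal.toReal_sum (fun i _ => hQfin i), hQsum, ENNReal.toReal_one]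
  obtain ⟨n₀, hn₀⟩ := exists_nat_ge (((N * N : ℕ) : ℝ≥0) * M / ε)
  set n : ℕ := n₀ + 1 with hn
  have hkey : ((N * N : ℕ) : ℝ≥0) * M ≤ (n : ℝ≥0) * ε := by
    rw [div_le_iff₀ hε0] at hn₀
    calc ((N * N : ℕ) : ℝ≥0) * M ≤ (n₀ : ℝ≥0) * ε := hn₀
      _ ≤ (n : ℝ≥0) * ε := by
          apply mul_le_mul_left
          exact_mod_cast Nat.le_succ n₀
  have hkeyE : (N : ℝ≥0∞) * N * M ≤ (n : ℝ≥0∞) * ε := by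
    have h2 : (((N * N : ℕ) : ℝ≥0) * M : ℝ≥0∞) ≤ ((n : ℝ≥0) * ε : ℝ≥0∞) :=
      ENNReal.coe_le_coe.mpr hkey
    push_cast at h2
    convert h2 using 2 <;> push_cast <;> ring
  have hNMε : (N : ℝ≥0∞) * M ≤ (n : ℝ≥0∞) * ε := by
    refine le_trans ?_ hkeyE
    have h1 : (1 : ℝ≥0∞) ≤ N := by exact_mod_cast hN
    calc (N : ℝ≥0∞) * M = (N : ℝ≥0∞) * 1 * M := by rw [mul_one]
      _ ≤ (N : ℝ≥0∞) * N * M := by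
          apply mul_le_mul_left
          exact mul_le_mul_right h1 _
  set c : Fin N → ℕ := fun i => ⌊(n : ℝ) * qr i⌋₊ with hc
  have hqr_nonneg : ∀ i, 0 ≤ qr i := fun i => ENNReal.toReal_nonneg
  have hc_le : ∀ i, (c i : ℝ) ≤ (n : ℝ) * qr i := fun i =>
    Nat.floor_le (by have := hqr_nonneg i; positivity)
  have hc_gt : ∀ i, (n : ℝ) * qr i < (c i : ℝ) + 1 := fun i => Nat.lt_floor_add_one _
  have hcsum_le : ∑ i, c i ≤ n := by
    have h1 : ((∑ i, c i : ℕ) : ℝ) ≤ (n : ℝ) := by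
      rw [Nat.cast_sum]
      calc ∑ i, (c i : ℝ) ≤ ∑ i, (n : ℝ) * qr i := Finset.sum_le_sum fun i _ => hc_le i
        _ = (n : ℝ) * ∑ i, qr i := by rw [Finset.mul_sum]
        _ = n := by rw [hqr_sum, mul_one]
    exact_mod_cast h1
  set r : ℕ := n - ∑ i, c i with hr
  have hrN : r ≤ N := by
    have h1 : (n : ℝ) ≤ ((∑ i, c i : ℕ) : ℝ) + (N : ℝ) := by
      rw [Nat.cast_sum]
      calc (n : ℝ) = (n : ℝ) * ∑ i, qr i := by rw [hqr_sum, mul_one]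
        _ = ∑ i, (n : ℝ) * qr i := Finset.mul_sum _ _ _
        _ ≤ ∑ i, ((c i : ℝ) + 1) := Finset.sum_le_sum fun i _ => (hc_gt i).le
        _ = (∑ i, (c i : ℝ)) + N := by
            rw [Finset.sum_add_distrib, Finset.sum_const, Finset.card_univ, Fintype.card_fin,
              nsmul_eq_mul, mul_one]
    have h2 : n ≤ ∑ i, c i + N := by exact_mod_cast h1
    omega
  set i0 : Fin N := ⟨0, hN⟩ with hi0
  classical
  set c' : Fin N → ℕ := fun i => c i + if i = i0 then r else 0 with hc'
  have hc'sum : ∑ i, c' i = n := by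
    rw [hc', Finset.sum_add_distrib, Finset.sum_ite_eq' Finset.univ i0 (fun _ => r)]
    simp only [Finset.mem_univ, if_true]
    omega
  have hup_i : ∀ i, (n : ℝ≥0∞) * Q i ≤ (c i : ℝ≥0∞) + 1 := by
    intro i
    have hreal : (n : ℝ) * qr i ≤ (c i : ℝ) + 1 := (hc_gt i).le
    have hQeq : Q i = ENNReal.ofReal (qr i) := by
      rw [hqr, ENNReal.ofReal_toReal (hQfin i)]
    rw [hQeq, ← ENNReal.ofReal_natCast n, ← ENNReal.ofReal_mul (by positivity),
      ← ENNReal.ofReal_natCast (c i), ← ENNReal.ofReal_one,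
      ← ENNReal.ofReal_add (by positivity) (by norm_num)]
    exact ENNReal.ofReal_le_ofReal hreal
  have hlow_i : ∀ i, (c' i : ℝ≥0∞) ≤ (n : ℝ≥0∞) * Q i + N := by
    intro i
    have hreal : (c' i : ℝ) ≤ (n : ℝ) * qr i + N := by
      have h1 : c' i ≤ c i + r := by simp only [hc']; split <;> omega
      have h2 : (c' i : ℝ) ≤ (c i : ℝ) + r := by exact_mod_cast h1
      have h3 : (r : ℝ) ≤ N := by exact_mod_cast hrN
      linarith [hc_le i]
    have hQeq : Q i = ENNReal.ofReal (qr i) := by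
      rw [hqr, ENNReal.ofReal_toReal (hQfin i)]
    have hnn : 0 ≤ (n : ℝ) * qr i := by have := hqr_nonneg i; positivity
    rw [hQeq, ← ENNReal.ofReal_natCast n, ← ENNReal.ofReal_mul (by positivity),
      ← ENNReal.ofReal_natCast (c' i), ← ENNReal.ofReal_natCast N,
      ← ENNReal.ofReal_add hnn (by positivity)]
    exact ENNReal.ofReal_le_ofReal hreal
  obtain ⟨w, hwmem, hwsum⟩ := exists_fn_sum N c' p
  refine ⟨∑ i, c' i, by omega, w, ?_, ?_⟩
  · intro j
    obtain ⟨i, hi⟩ := hwmem j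
    rw [← hi]
    exact hpH i
  intro x hx
  obtain ⟨hub, hlb⟩ := hb x hx
  set I := ∫⁻ y in K, (k x y : ℝ≥0∞) ∂μ with hI
  set kp : Fin N → ℝ≥0∞ := fun i => (k x (p i) : ℝ≥0∞) with hkp
  have hkpM : ∀ i, kp i ≤ (M : ℝ≥0∞) := fun i =>
    ENNReal.coe_le_coe.mpr (hMle x hx i)
  have hdivsum : (∑ i, q i * kp i) / μ K = ∑ i, Q i * kp i := by
    rw [ENNReal.div_eq_inv_mul, Finset.mul_sum]
    refine Finset.sum_congr rfl fun i _ => ?_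
    simp only [hQ, ENNReal.div_eq_inv_mul]
    ring
  have hεcancel : (ε : ℝ≥0∞) * μ K / μ K = ε := by
    rw [mul_div_assoc, ENNReal.div_self hμK hKfin, mul_one]
  have hA : I / μ K ≤ ∑ i, Q i * kp i + ε := by
    calc I / μ K ≤ (∑ i, q i * kp i + ε * μ K) / μ K := ENNReal.div_le_div_right hub _
      _ = (∑ i, q i * kp i) / μ K + ε * μ K / μ K := ENNReal.add_div
      _ = ∑ i, Q i * kp i + ε := by rw [hdivsum, hεcancel]
  have hB : ∑ i, Q i * kp i ≤ I / μ K + ε := by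
    calc ∑ i, Q i * kp i = (∑ i, q i * kp i) / μ K := hdivsum.symm
      _ ≤ (I + ε * μ K) / μ K := ENNReal.div_le_div_right hlb _
      _ = I / μ K + ε := by rw [ENNReal.add_div, hεcancel]
  have hnne : (n : ℝ≥0∞) ≠ 0 := by
    simp [hn]
  have hnfin : (n : ℝ≥0∞) ≠ ∞ := by simp
  have hkey1 : (n : ℝ≥0∞) * ∑ i, Q i * kp i ≤ (∑ i, (c' i : ℝ≥0∞) * kp i) + n * ε := by
    calc (n : ℝ≥0∞) * ∑ i, Q i * kp i = ∑ i, ((n : ℝ≥0∞) * Q i) * kp i := by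
          rw [Finset.mul_sum]; exact Finset.sum_congr rfl fun i _ => by ring
      _ ≤ ∑ i, ((c i : ℝ≥0∞) + 1) * kp i :=
          Finset.sum_le_sum fun i _ => mul_le_mul_left (hup_i i) _
      _ = ∑ i, (c i : ℝ≥0∞) * kp i + ∑ i, kp i := by
          rw [← Finset.sum_add_distrib]
          exact Finset.sum_congr rfl fun i _ => by ring
      _ ≤ ∑ i, (c' i : ℝ≥0∞) * kp i + ∑ i, kp i := by
          apply add_le_add_left
          refine Finset.sum_le_sum fun i _ => mul_le_mul_left ?_ _
          have : c i ≤ c' i := by simp only [hc']; split <;> omega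
          exact_mod_cast this
      _ ≤ ∑ i, (c' i : ℝ≥0∞) * kp i + (N : ℝ≥0∞) * M := by
          apply add_le_add_right
          calc ∑ i, kp i ≤ ∑ _i : Fin N, (M : ℝ≥0∞) := Finset.sum_le_sum fun i _ => hkpM i
            _ = (N : ℝ≥0∞) * M := by
                rw [Finset.sum_const, Finset.card_univ, Fintype.card_fin, nsmul_eq_mul]
      _ ≤ (∑ i, (c' i : ℝ≥0∞) * kp i) + n * ε := add_le_add_right hNMε _
  have hkey2 : ∑ i, (c' i : ℝ≥0∞) * kp i ≤ (n : ℝ≥0∞) * (∑ i, Q i * kp i) + n * ε := by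
    calc ∑ i, (c' i : ℝ≥0∞) * kp i ≤ ∑ i, ((n : ℝ≥0∞) * Q i + N) * kp i :=
          Finset.sum_le_sum fun i _ => mul_le_mul_left (hlow_i i) _
      _ = (n : ℝ≥0∞) * (∑ i, Q i * kp i) + (N : ℝ≥0∞) * ∑ i, kp i := by
          rw [Finset.mul_sum, Finset.mul_sum, ← Finset.sum_add_distrib]
          exact Finset.sum_congr rfl fun i _ => by ring
      _ ≤ (n : ℝ≥0∞) * (∑ i, Q i * kp i) + (N : ℝ≥0∞) * ((N : ℝ≥0∞) * M) := by
          apply add_le_add_right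
          apply mul_le_mul_right
          calc ∑ i, kp i ≤ ∑ _i : Fin N, (M : ℝ≥0∞) := Finset.sum_le_sum fun i _ => hkpM i
            _ = (N : ℝ≥0∞) * M := by
                rw [Finset.sum_const, Finset.card_univ, Fintype.card_fin, nsmul_eq_mul]
      _ ≤ (n : ℝ≥0∞) * (∑ i, Q i * kp i) + n * ε := by
          apply add_le_add_right
          rw [← mul_assoc]
          exact hkeyE
  have hmuldiv : ∀ a : ℝ≥0∞, (n : ℝ≥0∞) * a / n = a := fun a => by
    rw [mul_comm, mul_div_assoc, ENNReal.div_self hnne hnfin, mul_one]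
  have hdiv1 : ∑ i, Q i * kp i ≤ (∑ i, (c' i : ℝ≥0∞) * kp i) / n + ε := by
    calc ∑ i, Q i * kp i = (n : ℝ≥0∞) * (∑ i, Q i * kp i) / n := (hmuldiv _).symm
      _ ≤ ((∑ i, (c' i : ℝ≥0∞) * kp i) + n * ε) / n := ENNReal.div_le_div_right hkey1 _
      _ = (∑ i, (c' i : ℝ≥0∞) * kp i) / n + ε := by rw [ENNReal.add_div, hmuldiv]
  have hdiv2 : (∑ i, (c' i : ℝ≥0∞) * kp i) / n ≤ ∑ i, Q i * kp i + ε := by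
    calc (∑ i, (c' i : ℝ≥0∞) * kp i) / n
        ≤ ((n : ℝ≥0∞) * (∑ i, Q i * kp i) + n * ε) / n := ENNReal.div_le_div_right hkey2 _
      _ = ∑ i, Q i * kp i + ε := by rw [ENNReal.add_div, hmuldiv, hmuldiv]
  have hcast : ((∑ i, c' i : ℕ) : ℝ≥0∞) = (n : ℝ≥0∞) := by
    exact_mod_cast congrArg (Nat.cast : ℕ → ℝ≥0∞) hc'sum
  have hsum_eq : (∑ j, (k x (w j) : ℝ≥0∞)) = ∑ i, (c' i : ℝ≥0∞) * kp i :=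
    hwsum (fun y => (k x y : ℝ≥0∞))
  rw [hsum_eq, hcast]
  constructor
  · calc I / μ K ≤ ∑ i, Q i * kp i + ε := hA
      _ ≤ ((∑ i, (c' i : ℝ≥0∞) * kp i) / n + ε) + ε := add_le_add_left hdiv1 _
      _ = (∑ i, (c' i : ℝ≥0∞) * kp i) / n + ((ε : ℝ≥0∞) + ε) := by rw [add_assoc]
      _ ≤ (∑ i, (c' i : ℝ≥0∞) * kp i) / n + δ := add_le_add_right hεδ _
  · calc (∑ i, (c' i : ℝ≥0∞) * kp i) / n ≤ ∑ i, Q i * kp i + ε := hdiv2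
      _ ≤ (I / μ K + ε) + ε := add_le_add_left hB _
      _ = I / μ K + ((ε : ℝ≥0∞) + ε) := by rw [add_assoc]
      _ ≤ I / μ K + δ := add_le_add_right hεδ _
end AuxDisc
/-- For a continuous, symmetric, finite-valued kernel and compact `L`,
`R(H,L) = A(H,L)` for every `H ⊆ X`. -/
theorem rendezvous_eq_averageSet
    {X : Type*} [TopologicalSpace X] [LocallyCompactSpace X] [T2Space X]
    [MeasurableSpace X] [BorelSpace X]
    (k : X → X → NNReal)
    (hk : Continuous fun p : X × X => k p.1 p.2)
    (hksymm : ∀ x y, k x y = k y x)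
    (H L : Set X) (hL : IsCompact L) :
    rendezvous (fun x y => (k x y : ℝ≥0∞)) H L =
      averageSet (fun x y => (k x y : ℝ≥0∞)) H L := by
  ext t
  simp only [rendezvous, rendezvousN, averageSet, mem_iInter, mem_Icc]
  constructor
  · -- rendezvous ⊆ averageSet
    intro ht μ hμ
    obtain ⟨hprob, hreg, hHμ⟩ := hμ
    haveI := hprob
    obtain ⟨h0, hh0⟩ := H_nonempty μ hHμ
    rcases L.eq_empty_or_nonempty with hLe | hLne
    · exfalso
      obtain ⟨hle1, hle2⟩ := ht 0 (fun _ => h0) (fun _ => hh0)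
      rw [hLe] at hle1 hle2
      simp only [mem_empty_iff_false, not_false_eq_true, iInf_neg, iInf_top,
        iSup_neg, iSup_bot] at hle1 hle2
      exact absurd (hle1.trans hle2) (by simp)
    constructor
    · -- lower bound : ⨅ ≤ t
      by_contra hcon
      push_neg at hcon
      obtain ⟨t', ht1, ht2⟩ := exists_between hcon
      have ht'top : t' ≠ ⊤ := ht2.ne_top
      have httop : t ≠ ⊤ := ht1.ne_top
      have hpt : ∀ x ∈ L, t' < ∫⁻ y, ((k x y : ℝ≥0∞)) ∂μ := by
        intro x hx
        calc t' < ⨅ x ∈ L, potential (fun a b => ((k a b : ℝ≥0∞))) μ x := ht2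
          _ ≤ potential (fun a b => ((k a b : ℝ≥0∞))) μ x := biInf_le _ hx
          _ = ∫⁻ y, ((k x y : ℝ≥0∞)) ∂μ := rfl
      obtain ⟨K, hKc, hKall⟩ := exists_compact_uniform_gt k hk μ hreg hHμ hL hpt
      obtain ⟨x₀, hx₀⟩ := hLne
      have hμK : μ K ≠ 0 := by
        intro h
        have := hKall x₀ hx₀
        rw [Measure.restrict_eq_zero.mpr h, lintegral_zero_measure] at this
        simp at this
      have ht'0 : t' ≠ 0 := by
        intro h
        rw [h] at ht1
        simp at ht1
      set δ0 : ℝ≥0∞ := (t' - t) / 2 with hδ0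
      have hsub0 : t' - t ≠ 0 := by
        rw [ne_eq, tsub_eq_zero_iff_le]
        exact not_le.mpr ht1
      have hsubfin : t' - t ≠ ⊤ := ne_top_of_le_ne_top ht'top tsub_le_self
      have hδ0ne : δ0 ≠ 0 := by
        rw [hδ0]
        simp [ENNReal.div_eq_zero_iff, hsub0]
      have hδ0fin : δ0 ≠ ⊤ := by
        rw [hδ0]
        exact (ENNReal.div_lt_top hsubfin (by norm_num)).ne
      have htδ : t + δ0 + δ0 = t' := by
        rw [add_assoc, hδ0, ENNReal.add_halves, add_tsub_cancel_of_le ht1.le]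
      obtain ⟨n, hn, w, hwH, hbd⟩ :=
        exists_discrete_approx k hk μ hHμ hL hKc hμK hδ0ne
      have hclaim : ∀ x ∈ L, t + δ0 < (∑ j, ((k x (w j) : ℝ≥0∞))) / n := by
        intro x hx
        have h1 := (hbd x hx).1
        have h2 : t' < (∫⁻ y in K, ((k x y : ℝ≥0∞)) ∂μ) / μ K := by
          calc t' < ∫⁻ y in K, ((k x y : ℝ≥0∞)) ∂μ := hKall x hx
            _ = (∫⁻ y in K, ((k x y : ℝ≥0∞)) ∂μ) / 1 := (div_one _).symm
            _ ≤ (∫⁻ y in K, ((k x y : ℝ≥0∞)) ∂μ) / μ K :=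
                ENNReal.div_le_div_left prob_le_one _
        have h3 : t + δ0 + δ0 < (∑ j, ((k x (w j) : ℝ≥0∞))) / n + δ0 := by
          rw [htδ]
          exact h2.trans_le h1
        exact (ENNReal.add_lt_add_iff_right hδ0fin).mp h3
      obtain ⟨m, rfl⟩ : ∃ m, n = m + 1 := ⟨n - 1, by omega⟩
      have hrend := (ht m w hwH).1
      have hge : t + δ0 ≤ ⨅ x ∈ L, (∑ j, ((k x (w j) : ℝ≥0∞))) / ((m + 1 : ℕ) : ℝ≥0∞) :=
        le_iInf₂ fun x hx => (hclaim x hx).le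
      have : t + δ0 ≤ t := hge.trans hrend
      have ht_lt : t < t + δ0 := ENNReal.lt_add_right httop hδ0ne
      exact absurd this (not_le.mpr ht_lt)
    · -- upper bound : t ≤ ⨆
      by_contra hcon
      push_neg at hcon
      set s := ⨆ x ∈ L, potential (fun a b => ((k a b : ℝ≥0∞))) μ x with hs
      obtain ⟨m0, hm1, hm2⟩ := exists_between hcon
      have hm0fin : m0 ≠ ⊤ := hm2.ne_top
      have hsfin : s ≠ ⊤ := hm1.ne_top
      classical
      set c : ℝ≥0∞ := if s = 0 then 1/2 else s / m0 with hcdef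
      have hm00 : s ≠ 0 → m0 ≠ 0 := fun h0 => by
        intro h
        rw [h] at hm1
        exact h0 (le_zero_iff.mp hm1.le |>.symm ▸ rfl)
      have hc0 : c ≠ 0 := by
        rw [hcdef]
        split
        · norm_num
        · next h =>
          simp only [ne_eq, ENNReal.div_eq_zero_iff]
          push_neg
          exact ⟨h, hm0fin⟩
      have hc1 : c < 1 := by
        rw [hcdef]
        split
        · exact ENNReal.half_lt_self one_ne_zero one_ne_top
        · next h =>
          rw [ENNReal.div_lt_iff (Or.inl (hm00 h)) (Or.inl hm0fin), one_mul]
          exact hm1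
      have hcfin : c ≠ ⊤ := (hc1.trans one_lt_top).ne
      have hsc : s / c ≤ m0 := by
        rw [hcdef]
        split
        · next h => simp [h]
        · next h =>
          rw [ENNReal.div_le_iff_le_mul (Or.inl ?hne) (Or.inl ?hfin)]
          · rw [ENNReal.mul_div_cancel (hm00 h) hm0fin]
          case hne =>
            simp only [ne_eq, ENNReal.div_eq_zero_iff]
            push_neg
            exact ⟨h, hm0fin⟩
          case hfin =>
            exact (ENNReal.div_lt_top hsfin (hm00 h)).ne
      haveI := hreg
      obtain ⟨K, -, hKc, hKgt⟩ := MeasurableSet.exists_lt_isCompact_of_ne_top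
        (μ := μ) MeasurableSet.univ (measure_ne_top μ univ) (r := c)
        (by rw [measure_univ]; exact hc1)
      have hμK : μ K ≠ 0 := fun h => by
        rw [h] at hKgt
        exact absurd hKgt (by simp [hc0, pos_iff_ne_zero])
      set δ0 : ℝ≥0∞ := if t = ⊤ then 1 else (t - m0) / 2 with hδ0
      have hδ0ne : δ0 ≠ 0 := by
        rw [hδ0]
        split
        · norm_num
        · next h =>
          have : t - m0 ≠ 0 := by
            rw [ne_eq, tsub_eq_zero_iff_le]
            exact not_le.mpr hm2
          simp [ENNReal.div_eq_zero_iff, this]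
      have hmδt : m0 + δ0 < t := by
        rw [hδ0]
        split
        · next h =>
          rw [h]
          exact ENNReal.add_lt_top.mpr ⟨hm0fin.lt_top, one_lt_top⟩ |>.trans_le le_top
            |> fun _ => by
              rw [h] at *
              exact ENNReal.add_lt_top.mpr ⟨hm0fin.lt_top, one_lt_top⟩
        · next h =>
          have hfin : t - m0 ≠ ⊤ := ne_top_of_le_ne_top h tsub_le_self
          have hne : t - m0 ≠ 0 := by
            rw [ne_eq, tsub_eq_zero_iff_le]
            exact not_le.mpr hm2
          calc m0 + (t - m0) / 2 < m0 + (t - m0) :=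
                ENNReal.add_lt_add_left hm0fin (ENNReal.half_lt_self hne hfin)
            _ = t := add_tsub_cancel_of_le hm2.le
      obtain ⟨n, hn, w, hwH, hbd⟩ :=
        exists_discrete_approx k hk μ hHμ hL hKc hμK hδ0ne
      have hclaim : ∀ x ∈ L, (∑ j, ((k x (w j) : ℝ≥0∞))) / n ≤ m0 + δ0 := by
        intro x hx
        have h1 := (hbd x hx).2
        have h2 : (∫⁻ y in K, ((k x y : ℝ≥0∞)) ∂μ) / μ K ≤ m0 := by
          calc (∫⁻ y in K, ((k x y : ℝ≥0∞)) ∂μ) / μ K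
              ≤ (∫⁻ y, ((k x y : ℝ≥0∞)) ∂μ) / μ K := by
                gcongr
                exact Measure.restrict_le_self
            _ ≤ s / μ K := by
                gcongr
                show potential (fun a b => ((k a b : ℝ≥0∞))) μ x ≤ s
                exact le_biSup _ hx
            _ ≤ s / c := ENNReal.div_le_div_left hKgt.le _
            _ ≤ m0 := hsc
        calc (∑ j, ((k x (w j) : ℝ≥0∞))) / n
            ≤ (∫⁻ y in K, ((k x y : ℝ≥0∞)) ∂μ) / μ K + δ0 := h1
          _ ≤ m0 + δ0 := add_le_add_left h2 _
      obtain ⟨m, rfl⟩ : ∃ m, n = m + 1 := ⟨n - 1, by omega⟩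
      have hrend := (ht m w hwH).2
      have hle : (⨆ x ∈ L, (∑ j, ((k x (w j) : ℝ≥0∞))) / ((m + 1 : ℕ) : ℝ≥0∞)) ≤ m0 + δ0 :=
        iSup₂_le fun x hx => hclaim x hx
      exact absurd (hrend.trans_lt (hle.trans_lt hmδt)) (lt_irrefl t)
  · -- averageSet ⊆ rendezvous
    intro ht n w hw
    have hmem : (∑ j : Fin (n+1), (((n : ℝ≥0∞)+1)⁻¹) • Measure.dirac (w j)) ∈ M1 H :=
      ⟨disc_prob w, disc_regular w, disc_H w hw⟩
    have h := ht _ hmem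
    have hpot : ∀ x : X, potential (fun a b => ((k a b : ℝ≥0∞)))
        (∑ j : Fin (n+1), (((n : ℝ≥0∞)+1)⁻¹) • Measure.dirac (w j)) x
        = (∑ j, ((k x (w j) : ℝ≥0∞))) / ((n + 1 : ℕ) : ℝ≥0∞) := by
      intro x
      rw [disc_potential k hk w x]
      norm_cast
    constructor
    · refine le_trans (le_of_eq ?_) h.1
      exact iInf_congr fun x => iInf_congr fun _ => (hpot x).symm
    · refine le_trans h.2 (le_of_eq ?_)
      exact iSup_congr fun x => iSup_congr fun _ => hpot x
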